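/- Let G be a graph on n vertices and k a natural number with n > (3/2)·k. Then G has no total edge cover of size at most k. Equivalently, any k edges forming a total edge cover can cover at most (3/2)·k vertices. -/

import Mathlib

open Finset

def P2Verts {V : Type*} [DecidableEq V] (p : V × V × V) : Finset V := {p.1, p.2.1, p.2.2}

def IsP2 {V : Type*} (G : SimpleGraph V) (p : V × V × V) : Prop :=
  G.Adj p.1 p.2.1 ∧ G.Adj p.2.1 p.2.2 ∧ p.1 ≠ p.2.2

def IsP2Packing {V : Type*} [DecidableEq V] (G : SimpleGraph V) (P : Finset (V × V × V)) : Prop :=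
  (∀ p ∈ P, IsP2 G p) ∧
  ∀ p ∈ P, ∀ q ∈ P, p ≠ q → Disjoint (P2Verts p) (P2Verts q)

def PackVerts {V : Type*} [DecidableEq V] (P : Finset (V × V × V)) : Finset V :=
  P.biUnion P2Verts

def IsMaximalP2Packing {V : Type*} [DecidableEq V] (G : SimpleGraph V)
    (P : Finset (V × V × V)) : Prop :=
  IsP2Packing G P ∧ ∀ q, IsP2 G q → ¬ Disjoint (P2Verts q) (PackVerts P)

def P2Edges {V : Type*} [DecidableEq V] (p : V × V × V) : Finset (Sym2 V) :=
  {s(p.1, p.2.1), s(p.2.1, p.2.2)}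

def IsTotalEdgeCover {V : Type*} (G : SimpleGraph V) (EC : Finset (Sym2 V)) : Prop :=
  (EC : Set (Sym2 V)) ⊆ G.edgeSet ∧
  (∀ v : V, ∃ e ∈ EC, v ∈ e) ∧
  ∀ e ∈ EC, ∃ e' ∈ EC, e' ≠ e ∧ ∃ a ∈ e, ∃ b ∈ e',
    (SimpleGraph.fromEdgeSet (EC : Set (Sym2 V))).Reachable a b


noncomputable def cOf {V : Type*} (H : SimpleGraph V) (e : Sym2 V) : H.ConnectedComponent :=
  H.connectedComponentMk (Quot.out e).1

lemma cOf_eq {V : Type*} (H : SimpleGraph V) {e : Sym2 V} {a : V}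
    (he : e ∈ H.edgeSet) (ha : a ∈ e) : cOf H e = H.connectedComponentMk a := by
  rcases hp : Quot.out e with ⟨x, y⟩
  have hout : s(x, y) = e := by have := Quot.out_eq e; rw [hp] at this; exact this
  rw [← hout] at he ha
  have hadj : H.Adj x y := he
  have hc : cOf H e = H.connectedComponentMk x := by rw [cOf, hp]
  rcases Sym2.mem_iff.mp ha with rfl | rfl
  · exact hc
  · exact hc.trans (SimpleGraph.ConnectedComponent.sound hadj.reachable)

lemma comp_bound {V : Type*} [Fintype V] [DecidableEq V] (H : SimpleGraph V)
    (E : Finset (Sym2 V)) (hE : ∀ a b, H.Adj a b → s(a, b) ∈ E)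
    (c : H.ConnectedComponent) [DecidablePred fun v => H.connectedComponentMk v = c]
    [DecidablePred fun e => cOf H e = c] :
    (univ.filter fun v => H.connectedComponentMk v = c).card
      ≤ (E.filter fun e => cOf H e = c).card + 1 := by
  classical
  obtain ⟨r, hr⟩ : ∃ r, H.connectedComponentMk r = c := c.exists_rep
  have key : ∀ v, H.connectedComponentMk v = c → v ≠ r →
      ∃ w, H.Adj v w ∧ H.dist w r < H.dist v r := by
    intro v hv hvr
    have hreach : H.Reachable v r := SimpleGraph.ConnectedComponent.exact (hv.trans hr.symm)
    obtain ⟨p, hp⟩ := hreach.exists_walk_length_eq_dist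
    cases p with
    | nil => exact absurd rfl hvr
    | cons h q =>
      refine ⟨_, h, ?_⟩
      have h1 := SimpleGraph.dist_le q
      have h2 : q.length + 1 = H.dist v r := by simpa using hp
      omega
  choose! nxt hadj hdist using key
  have hcard : ((univ.filter fun v => H.connectedComponentMk v = c).erase r).card
      ≤ (E.filter fun e => cOf H e = c).card := by
    apply Finset.card_le_card_of_injOn (fun v => s(v, nxt v))
    · intro v hv
      simp only [mem_coe, mem_erase, mem_filter] at hv
      obtain ⟨hvr, _, hvc⟩ := hv
      have h1 := hadj v hvc hvr
      refine mem_filter.mpr ⟨hE _ _ h1, ?_⟩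
      rw [cOf_eq H ((H.mem_edgeSet).mpr h1) (Sym2.mem_mk_left _ _)]
      exact hvc
    · intro a ha b hb hab
      simp only [coe_erase, Set.mem_diff, mem_coe, mem_filter, mem_univ, true_and,
        Set.mem_singleton_iff] at ha hb
      obtain ⟨hac, har⟩ := ha
      obtain ⟨hbc, hbr⟩ := hb
      by_contra hne
      rw [Sym2.eq_iff] at hab
      rcases hab with ⟨h1, _⟩ | ⟨h1, h2⟩
      · exact hne h1
      · have d1 := hdist a hac har
        have d2 := hdist b hbc hbr
        rw [h2] at d1
        rw [← h1] at d2
        omega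
  have hrS : r ∈ univ.filter fun v => H.connectedComponentMk v = c := by simp [hr]
  have := Finset.card_erase_add_one hrS
  omega

/-- If n > (3/2)k then G has no total edge cover of size at most k. -/
theorem stmt2 {V : Type*} [Fintype V] [DecidableEq V] (G : SimpleGraph V) (k : ℕ)
    (hn : 3 * k < 2 * Fintype.card V) :
    ∀ EC : Finset (Sym2 V), IsTotalEdgeCover G EC → ¬ EC.card ≤ k := by
  classical
  intro EC hEC hk
  set H := SimpleGraph.fromEdgeSet (EC : Set (Sym2 V)) with hH
  obtain ⟨hsub, hcover, hcomp⟩ := hEC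
  have : Fintype H.ConnectedComponent := Fintype.ofFinite _
  have hE : ∀ a b, H.Adj a b → s(a, b) ∈ EC := by
    intro a b hab
    rw [hH, SimpleGraph.fromEdgeSet_adj] at hab
    exact hab.1
  have hmemH : ∀ e ∈ EC, e ∈ H.edgeSet := by
    intro e he
    rw [hH, SimpleGraph.edgeSet_fromEdgeSet]
    exact ⟨he, G.not_isDiag_of_mem_edgeSet (hsub he)⟩
  have hn1 : Fintype.card V
      = ∑ c : H.ConnectedComponent, (univ.filter fun v => H.connectedComponentMk v = c).card := by
    rw [← card_univ]
    exact card_eq_sum_card_fiberwise (by simp)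
  have hk1 : EC.card = ∑ c : H.ConnectedComponent, (EC.filter fun e => cOf H e = c).card :=
    card_eq_sum_card_fiberwise (by simp)
  have htwo : ∀ c : H.ConnectedComponent, 2 ≤ (EC.filter fun e => cOf H e = c).card := by
    intro c
    obtain ⟨v, hv⟩ : ∃ v, H.connectedComponentMk v = c := c.exists_rep
    obtain ⟨e, heEC, hve⟩ := hcover v
    have hce : cOf H e = c := (cOf_eq H (hmemH e heEC) hve).trans hv
    obtain ⟨e', he'EC, hne, a, hae, b, hbe', hreach⟩ := hcomp e heEC
    have hce' : cOf H e' = c := by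
      rw [cOf_eq H (hmemH e' he'EC) hbe']
      have hab : H.connectedComponentMk a = H.connectedComponentMk b :=
        SimpleGraph.ConnectedComponent.sound hreach
      rw [← hab, ← cOf_eq H (hmemH e heEC) hae, hce]
    have hsub2 : ({e, e'} : Finset (Sym2 V)) ⊆ EC.filter fun e => cOf H e = c := by
      intro x hx
      rcases mem_insert.mp hx with rfl | hx
      · exact mem_filter.mpr ⟨heEC, hce⟩
      · rw [mem_singleton.mp hx]
        exact mem_filter.mpr ⟨he'EC, hce'⟩
    have h2 := card_le_card hsub2
    rwa [card_pair (Ne.symm hne)] at h2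
  have hfinal : 2 * Fintype.card V ≤ 3 * EC.card := by
    rw [hn1, hk1, Finset.mul_sum, Finset.mul_sum]
    apply sum_le_sum
    intro c _
    have h1 := comp_bound H EC hE c
    have h2 := htwo c
    omega
  omega
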